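/- Every graded submodule N of a finitely generated graded free d-graded k[t]-module (i.e. of a finite direct sum of modules F(p)) is itself isomorphic, as a d-graded module, to a finite direct sum of modules F(p'). In particular the category of finitely presented graded modules over k[t] with t homogeneous of nonzero degree d is hereditary: every graded submodule of a projective object is projective. -/

import Mathlib

/-!
Statement 11. Every graded submodule of a finitely generated graded free `d`-graded
`k[t]`-module (a finite direct sum of modules `F(p)`) is itself isomorphic, as a
`d`-graded module, to a finite direct sum of modules `F(p')`; i.e. the category of
finitely presented graded `k[t]`-modules (`deg t = d ≠ 0`) is hereditary.
-/

open Polynomial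
open scoped DirectSum

noncomputable section

variable (k : Type) [Field k]

/-- The grading of the free module `F(p)`: the `m`-th piece is `k·tʲ` if `m = p + jd`
for some `j ≥ 0`, and `0` otherwise. -/
def freeGrading (d p m : ℤ) : Submodule k (Polynomial k) :=
  ⨆ (j : ℕ) (_ : m = p + (j : ℤ) * d), Submodule.span k {(X : Polynomial k) ^ j}

/-- The grading of the finite direct sum `⨁ i, F(ps i)`. -/
def freeSumGrading (d : ℤ) (N : ℕ) (ps : Fin N → ℤ) (m : ℤ) :
    Submodule k (⨁ _i : Fin N, Polynomial k) :=
  ⨅ i : Fin N,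
    (freeGrading k d (ps i) m).comap (DirectSum.component k (Fin N) (fun _ => Polynomial k) i)

def grF (d : ℤ) (n : ℕ) (ps : Fin n → ℤ) (m : ℤ) : Submodule k (Fin n → Polynomial k) :=
  ⨅ i : Fin n, (freeGrading k d (ps i) m).comap
    (LinearMap.proj i : (Fin n → Polynomial k) →ₗ[k] Polynomial k)

variable {k}

lemma freeGrading_eq_span {d : ℤ} (hd : d ≠ 0) (p : ℤ) (j : ℕ) :
    freeGrading k d p (p + (j : ℤ) * d) = Submodule.span k {(X : Polynomial k) ^ j} := by
  unfold freeGrading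
  apply le_antisymm
  · refine iSup_le fun j' => iSup_le fun hj' => ?_
    have hjj : (j' : ℤ) = (j : ℤ) := mul_right_cancel₀ hd (by linarith)
    have : j' = j := by exact_mod_cast hjj
    subst this; exact le_rfl
  · exact le_iSup_of_le j (le_iSup_of_le rfl le_rfl)

lemma freeGrading_eq_bot {d p m : ℤ} (h : ∀ j : ℕ, m ≠ p + (j : ℤ) * d) :
    freeGrading k d p m = (⊥ : Submodule k (Polynomial k)) := by
  unfold freeGrading
  exact le_antisymm (iSup_le fun j => iSup_le fun hj => absurd hj (h j)) bot_le

lemma mem_freeGrading_iff {d : ℤ} (hd : d ≠ 0) {p m : ℤ} {f : Polynomial k} :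
    f ∈ freeGrading k d p m ↔
      f = 0 ∨ ∃ j : ℕ, m = p + (j : ℤ) * d ∧ ∃ c : k, f = C c * X ^ j := by
  by_cases h : ∃ j : ℕ, m = p + (j : ℤ) * d
  · obtain ⟨j, hj⟩ := h
    subst hj
    rw [freeGrading_eq_span hd, Submodule.mem_span_singleton]
    constructor
    · rintro ⟨c, rfl⟩
      exact Or.inr ⟨j, rfl, c, (smul_eq_C_mul _)⟩
    · rintro (rfl | ⟨j', hj', c, rfl⟩)
      · exact ⟨0, by simp⟩
      · have hjj : (j' : ℤ) = (j : ℤ) := mul_right_cancel₀ hd (by linarith)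
        have : j' = j := by exact_mod_cast hjj
        subst this
        exact ⟨c, (smul_eq_C_mul _)⟩
  · push_neg at h
    rw [freeGrading_eq_bot h, Submodule.mem_bot]
    constructor
    · exact fun hf => Or.inl hf
    · rintro (rfl | ⟨j, hj, _⟩)
      · rfl
      · exact absurd hj (h j)

lemma mul_mem_freeGrading {d : ℤ} (hd : d ≠ 0) {p m : ℤ} {f : Polynomial k}
    (hf : f ∈ freeGrading k d p m) (c : k) (j : ℕ) :
    C c * X ^ j * f ∈ freeGrading k d p (m + (j : ℤ) * d) := by
  rw [mem_freeGrading_iff hd] at hf ⊢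
  rcases hf with rfl | ⟨j', hj', c', rfl⟩
  · exact Or.inl (mul_zero _)
  · refine Or.inr ⟨j' + j, by push_cast; linarith, c * c', by rw [C_mul]; ring⟩

lemma mem_grF {d : ℤ} {n : ℕ} {ps : Fin n → ℤ} {m : ℤ} {x : Fin n → Polynomial k} :
    x ∈ grF k d n ps m ↔ ∀ i, x i ∈ freeGrading k d (ps i) m := by
  simp [grF, Submodule.mem_iInf]

lemma smul_mem_grF {d : ℤ} (hd : d ≠ 0) {m₀ m : ℤ} {g : Polynomial k}
    (hg : g ∈ freeGrading k d m₀ m) {n : ℕ} {ps : Fin n → ℤ} {v : Fin n → Polynomial k}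
    (hv : v ∈ grF k d n ps m₀) : g • v ∈ grF k d n ps m := by
  rcases (mem_freeGrading_iff hd).mp hg with rfl | ⟨j, hj, c, rfl⟩
  · simpa using zero_mem _
  · rw [mem_grF]
    intro i
    have h1 : ((C c * X ^ j) • v) i = C c * X ^ j * v i := rfl
    rw [h1, hj]
    exact mul_mem_freeGrading hd (mem_grF.mp hv i) c j

def extL (n : ℕ) : (Fin n → Polynomial k) →ₗ[Polynomial k] (Fin (n + 1) → Polynomial k) where
  toFun y := Fin.cons 0 y
  map_add' a b := by
    funext i
    refine Fin.cases ?_ (fun i => ?_) i <;> simp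
  map_smul' c a := by
    funext i
    refine Fin.cases ?_ (fun i => ?_) i <;> simp

@[simp] lemma extL_zero {n : ℕ} (y : Fin n → Polynomial k) : extL n y 0 = 0 := rfl
@[simp] lemma extL_succ {n : ℕ} (y : Fin n → Polynomial k) (i : Fin n) :
    extL n y i.succ = y i := by simp [extL]

lemma extL_injective {n : ℕ} : Function.Injective (extL (k := k) n) := by
  intro a b h
  funext i
  have := congrFun h i.succ
  simpa using this

lemma extL_mem_grF {d : ℤ} {n : ℕ} {ps : Fin (n + 1) → ℤ} {m : ℤ} {z : Fin n → Polynomial k} :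
    extL n z ∈ grF k d (n + 1) ps m ↔ z ∈ grF k d n (fun i => ps i.succ) m := by
  rw [mem_grF, mem_grF]
  constructor
  · intro h i
    simpa using h i.succ
  · intro h i
    refine Fin.cases ?_ (fun i => ?_) i
    · simpa using zero_mem _
    · simpa using h i

lemma hom_sum_zero {d : ℤ} (hd : d ≠ 0) {p : ℤ} (f : ℤ →₀ Polynomial k)
    (hf : ∀ m, f m ∈ freeGrading k d p m) (hsum : (f.sum fun _ v => v) = 0) (m : ℤ) :
    f m = 0 := by
  by_contra hne
  rcases (mem_freeGrading_iff hd).mp (hf m) with h | ⟨j, hj, c, hc⟩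
  · exact hne h
  have hc0 : c ≠ 0 := fun h => hne (by simp [hc, h])
  have hmem : m ∈ f.support := Finsupp.mem_support_iff.mpr hne
  have h1 : (f.sum fun _ v => v).coeff j = 0 := by rw [hsum]; simp
  rw [Finsupp.sum, Polynomial.finset_sum_coeff] at h1
  have h2 : ∑ m' ∈ f.support, (f m').coeff j = c := by
    rw [Finset.sum_eq_single_of_mem m hmem]
    · rw [hc]; simp [coeff_C_mul, coeff_X_pow]
    · intro m' _ hm'
      rcases (mem_freeGrading_iff hd).mp (hf m') with h | ⟨j', hj', c', hc'⟩
      · simp [h]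
      · have hjj : j ≠ j' := by
          rintro rfl
          exact hm' (hj' ▸ hj ▸ rfl)
        rw [hc']; simp [coeff_C_mul, coeff_X_pow, hjj]
  exact hc0 (h2 ▸ h1)

lemma comap_decomp {d : ℤ} {n : ℕ} {ps : Fin (n + 1) → ℤ}
    {N : Submodule (Polynomial k) (Fin (n + 1) → Polynomial k)}
    {z : Fin n → Polynomial k}
    (f : ℤ →₀ (Fin (n + 1) → Polynomial k))
    (hfN : ∀ m, f m ∈ N) (hfG : ∀ m, f m ∈ grF k d (n + 1) ps m)
    (hf0 : ∀ m, f m 0 = 0) (hsum : (f.sum fun _ v => v) = extL n z) :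
    ∃ g : ℤ →₀ (Fin n → Polynomial k),
      (∀ m, g m ∈ N.comap (extL n)) ∧ (∀ m, g m ∈ grF k d n (fun i => ps i.succ) m) ∧
        (g.sum fun _ v => v) = z := by
  refine ⟨f.mapRange (fun v i => v i.succ) rfl, fun m => ?_, fun m => ?_, ?_⟩
  · simp only [Submodule.mem_comap, Finsupp.mapRange_apply]
    have hext : extL n (fun i => f m i.succ) = f m := by
      funext i
      refine Fin.cases ?_ (fun i => ?_) i
      · simp [hf0 m]
      · simp
    rw [hext]; exact hfN m
  · rw [Finsupp.mapRange_apply, mem_grF]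
    intro i
    exact (mem_grF.mp (hfG m)) i.succ
  · rw [Finsupp.sum_mapRange_index (fun _ => rfl)]
    funext i
    rw [Finsupp.sum, Finset.sum_apply]
    have h := congrFun hsum i.succ
    rw [Finsupp.sum, Finset.sum_apply] at h
    simpa using h

lemma main_free {d : ℤ} (hd : d ≠ 0) :
    ∀ (n : ℕ) (ps : Fin n → ℤ) (N : Submodule (Polynomial k) (Fin n → Polynomial k)),
      (∀ x ∈ N, ∃ f : ℤ →₀ (Fin n → Polynomial k),
        (∀ m, f m ∈ N) ∧ (∀ m, f m ∈ grF k d n ps m) ∧ (f.sum fun _ v => v) = x) →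
      ∃ (n₁ : ℕ) (ps' : Fin n₁ → ℤ) (e : N ≃ₗ[Polynomial k] (Fin n₁ → Polynomial k)),
        ∀ (m : ℤ) (x : N),
          (x : Fin n → Polynomial k) ∈ grF k d n ps m ↔ e x ∈ grF k d n₁ ps' m := by
  intro n
  induction n with
  | zero =>
    intro ps N _
    haveI : Subsingleton (Fin 0 → Polynomial k) := ⟨fun a b => funext fun i => i.elim0⟩
    haveI : Subsingleton N := ⟨fun a b => Subtype.ext (Subsingleton.elim _ _)⟩
    refine ⟨0, ps, ?_, ?_⟩
    · exact
        { toFun := fun _ => 0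
          map_add' := fun _ _ => Subsingleton.elim _ _
          map_smul' := fun _ _ => Subsingleton.elim _ _
          invFun := fun _ => 0
          left_inv := fun _ => Subsingleton.elim _ _
          right_inv := fun _ => Subsingleton.elim _ _ }
    · intro m x
      constructor
      · intro _; rw [mem_grF]; exact fun i => i.elim0
      · intro _; rw [mem_grF]; exact fun i => i.elim0
  | succ n IH =>
    intro ps N hN
    by_cases hA : ∀ (m : ℤ), ∀ x ∈ N, x ∈ grF k d (n + 1) ps m → x 0 = 0
    · -- Case A: no homogeneous element has nonzero 0-th coordinate
      have hzero : ∀ x ∈ N, x 0 = 0 := by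
        intro x hx
        obtain ⟨f, hfN, hfG, hsum⟩ := hN x hx
        have h0 : ∀ m, f m 0 = 0 := fun m => hA m (f m) (hfN m) (hfG m)
        have : x 0 = (f.sum fun _ v => v) 0 := by rw [hsum]
        rw [this, Finsupp.sum, Finset.sum_apply]
        exact Finset.sum_eq_zero fun m _ => h0 m
      set K := N.comap (extL (k := k) n) with hK
      have hres : ∀ x ∈ K, extL n x ∈ N := fun x hx => hx
      let φ : K →ₗ[Polynomial k] N := (extL n).restrict hres
      have hφinj : Function.Injective φ := by
        intro a b h
        exact Subtype.ext (extL_injective (congrArg Subtype.val h))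
      have hφsurj : Function.Surjective φ := by
        rintro ⟨x, hx⟩
        have hext : extL n (fun i => x i.succ) = x := by
          funext i
          refine Fin.cases ?_ (fun i => ?_) i
          · simp [hzero x hx]
          · simp
        refine ⟨⟨fun i => x i.succ, ?_⟩, ?_⟩
        · show extL n _ ∈ N
          rw [hext]; exact hx
        · exact Subtype.ext hext
      let e₀ : K ≃ₗ[Polynomial k] N := LinearEquiv.ofBijective φ ⟨hφinj, hφsurj⟩
      have hHGK : ∀ z ∈ K, ∃ g : ℤ →₀ (Fin n → Polynomial k),
          (∀ m, g m ∈ K) ∧ (∀ m, g m ∈ grF k d n (fun i => ps i.succ) m) ∧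
            (g.sum fun _ v => v) = z := by
        intro z hz
        obtain ⟨f, hfN, hfG, hsum⟩ := hN (extL n z) hz
        exact comap_decomp f hfN hfG (fun m => hA m (f m) (hfN m) (hfG m)) hsum
      obtain ⟨n₁, ps', eK, heK⟩ := IH (fun i => ps i.succ) K hHGK
      refine ⟨n₁, ps', e₀.symm.trans eK, ?_⟩
      intro m x
      have hx : (x : Fin (n + 1) → Polynomial k) = extL n (e₀.symm x : Fin n → Polynomial k) := by
        have := e₀.apply_symm_apply x
        exact (congrArg Subtype.val this).symm
      rw [hx, extL_mem_grF]
      exact heK m (e₀.symm x)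
    · -- Case B: there is a homogeneous element with nonzero 0-th coordinate
      push_neg at hA
      obtain ⟨mw, xw, hxwN, hxwG, hxw0⟩ := hA
      have hxw0' := (mem_freeGrading_iff hd).mp (mem_grF.mp hxwG 0)
      rcases hxw0' with h | ⟨jw, hjw, cw, hcw⟩
      · exact absurd h hxw0
      classical
      set Pred : ℕ → Prop := fun j =>
        ∃ x, x ∈ N ∧ x ∈ grF k d (n + 1) ps (ps 0 + (j : ℤ) * d) ∧ x 0 ≠ 0 with hPred
      have hex : ∃ j, Pred j := ⟨jw, xw, hxwN, by rwa [← hjw], hxw0⟩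
      set a := Nat.find hex with ha
      obtain ⟨y₀, hy₀N, hy₀G, hy₀0⟩ := Nat.find_spec hex
      set m₀ : ℤ := ps 0 + (a : ℤ) * d with hm₀
      have hy₀0' := (mem_freeGrading_iff hd).mp (mem_grF.mp hy₀G 0)
      rcases hy₀0' with h | ⟨a', ha', c, hc⟩
      · exact absurd h hy₀0
      have haa : a' = a := by
        have : (a' : ℤ) = (a : ℤ) := mul_right_cancel₀ hd (by linarith)
        exact_mod_cast this
      subst haa
      have hcne : c ≠ 0 := fun h => hy₀0 (by simp [hc, h])
      set y : Fin (n + 1) → Polynomial k := (C c⁻¹ : Polynomial k) • y₀ with hy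
      have hyN : y ∈ N := N.smul_mem _ hy₀N
      have hyi : ∀ i, y i = c⁻¹ • y₀ i := by
        intro i
        show C c⁻¹ * y₀ i = _
        rw [smul_eq_C_mul]
      have hyG : y ∈ grF k d (n + 1) ps m₀ := by
        rw [mem_grF]
        intro i
        rw [hyi i]
        exact Submodule.smul_mem _ _ (mem_grF.mp hy₀G i)
      have hy0 : y 0 = X ^ a := by
        show C c⁻¹ * y₀ 0 = _
        rw [hc, ← mul_assoc, ← C_mul, inv_mul_cancel₀ hcne, C_1, one_mul]
      have hXa : (X : Polynomial k) ^ a ≠ 0 := pow_ne_zero _ X_ne_zero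
      -- divisibility
      have hdvd_hom : ∀ (m : ℤ) (x : Fin (n + 1) → Polynomial k),
          x ∈ N → x ∈ grF k d (n + 1) ps m → (X : Polynomial k) ^ a ∣ x 0 := by
        intro m x hxN hxG
        rcases (mem_freeGrading_iff hd).mp (mem_grF.mp hxG 0) with h | ⟨j, hj, c', hx0⟩
        · rw [h]; exact dvd_zero _
        by_cases hc' : c' = 0
        · rw [hx0, hc', C_0, zero_mul]; exact dvd_zero _
        have hx0ne : x 0 ≠ 0 := by
          rw [hx0]
          exact mul_ne_zero (fun hh => hc' (by simpa using congrArg (fun q => q.coeff 0) hh))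
            (pow_ne_zero _ X_ne_zero)
        have hPj : Pred j := ⟨x, hxN, by rwa [hj] at hxG, hx0ne⟩
        have hle : a ≤ j := Nat.find_min' hex hPj
        rw [hx0]
        exact Dvd.dvd.mul_left (pow_dvd_pow X hle) _
      have hdvd : ∀ x ∈ N, (X : Polynomial k) ^ a ∣ x 0 := by
        intro x hx
        obtain ⟨f, hfN, hfG, hsum⟩ := hN x hx
        have : x 0 = ∑ m ∈ f.support, f m 0 := by
          rw [← hsum, Finsupp.sum, Finset.sum_apply]
        rw [this]
        exact Finset.dvd_sum fun m _ => hdvd_hom m (f m) (hfN m) (hfG m)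
      set K := N.comap (extL (k := k) n) with hK
      -- the splitting map
      let Θ : (K × Polynomial k) →ₗ[Polynomial k] (Fin (n + 1) → Polynomial k) :=
        ((extL n).comp K.subtype).comp (LinearMap.fst _ _ _) +
          (LinearMap.toSpanSingleton (Polynomial k) _ y).comp (LinearMap.snd _ _ _)
      have hΘ : ∀ w : K × Polynomial k,
          Θ w = extL n (w.1 : Fin n → Polynomial k) + w.2 • y := fun w => rfl
      have hΘmem : ∀ w, Θ w ∈ N := by
        rintro ⟨z, g⟩
        rw [hΘ]
        exact N.add_mem z.2 (N.smul_mem g hyN)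
      let θ : (K × Polynomial k) →ₗ[Polynomial k] N := Θ.codRestrict N hΘmem
      have hθinj : Function.Injective θ := by
        rintro ⟨z, g⟩ ⟨z', g'⟩ h
        have h' : extL n (z : Fin n → Polynomial k) + g • y
            = extL n (z' : Fin n → Polynomial k) + g' • y := by
          have := congrArg Subtype.val h
          rwa [show (θ (z, g) : Fin (n + 1) → Polynomial k) = Θ (z, g) from rfl,
            show (θ (z', g') : Fin (n + 1) → Polynomial k) = Θ (z', g') from rfl,
            hΘ, hΘ] at this
        have h0 := congrFun h' 0
        simp only [Pi.add_apply, Pi.smul_apply, extL_zero, hy0, zero_add, smul_eq_mul] at h0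
        have hgg : g = g' := mul_right_cancel₀ hXa h0
        subst hgg
        have : extL n (z : Fin n → Polynomial k) = extL n (z' : Fin n → Polynomial k) :=
          add_right_cancel h'
        exact Prod.ext (Subtype.ext (extL_injective this)) rfl
      have hθsurj : Function.Surjective θ := by
        rintro ⟨x, hx⟩
        obtain ⟨g, hg⟩ := hdvd x hx
        set w : Fin (n + 1) → Polynomial k := x - g • y with hw
        have hwN : w ∈ N := N.sub_mem hx (N.smul_mem g hyN)
        have hw0 : w 0 = 0 := by
          simp only [hw, Pi.sub_apply, Pi.smul_apply, hy0, smul_eq_mul, hg]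
          ring
        have hext : extL n (fun i => w i.succ) = w := by
          funext i
          refine Fin.cases ?_ (fun i => ?_) i
          · simp [hw0]
          · simp
        refine ⟨(⟨fun i => w i.succ, ?_⟩, g), ?_⟩
        · show extL n _ ∈ N
          rw [hext]; exact hwN
        · apply Subtype.ext
          show Θ _ = x
          rw [hΘ]
          simp only
          rw [hext, hw]
          ring
      let eθ : (K × Polynomial k) ≃ₗ[Polynomial k] N := LinearEquiv.ofBijective θ ⟨hθinj, hθsurj⟩
      -- K is graded
      have hHGK : ∀ z ∈ K, ∃ g : ℤ →₀ (Fin n → Polynomial k),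
          (∀ m, g m ∈ K) ∧ (∀ m, g m ∈ grF k d n (fun i => ps i.succ) m) ∧
            (g.sum fun _ v => v) = z := by
        intro z hz
        obtain ⟨f, hfN, hfG, hsum⟩ := hN (extL n z) hz
        have hf0 : ∀ m, f m 0 = 0 := by
          have hz0 : (f.sum fun _ v => v) 0 = 0 := by rw [hsum]; simp
          have h0sum : ((f.mapRange (fun v => v 0) rfl).sum fun _ v => v) = 0 := by
            rw [Finsupp.sum_mapRange_index (fun _ => rfl)]
            rw [Finsupp.sum, Finset.sum_apply] at hz0
            rw [Finsupp.sum]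
            exact hz0
          intro m
          have := hom_sum_zero hd (f.mapRange (fun v => v 0) rfl)
            (fun m' => by
              rw [Finsupp.mapRange_apply]
              exact mem_grF.mp (hfG m') 0) h0sum m
          rwa [Finsupp.mapRange_apply] at this
        exact comap_decomp f hfN hfG hf0 hsum
      obtain ⟨n', ps'', eK, heK⟩ := IH (fun i => ps i.succ) K hHGK
      -- assemble the final equivalence
      let eC : ((Fin n' → Polynomial k) × Polynomial k) ≃ₗ[Polynomial k]
          (Fin (n' + 1) → Polynomial k) :=
        { toFun := fun w => Fin.cons w.2 w.1
          map_add' := by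
            intro w w'
            funext i
            refine Fin.cases ?_ (fun i => ?_) i <;> simp
          map_smul' := by
            intro r w
            funext i
            refine Fin.cases ?_ (fun i => ?_) i <;> simp
          invFun := fun x => (fun i => x i.succ, x 0)
          left_inv := by rintro ⟨v, g⟩; simp
          right_inv := by
            intro x
            funext i
            refine Fin.cases ?_ (fun i => ?_) i <;> simp }
      refine ⟨n' + 1, Fin.cons m₀ ps'',
        eθ.symm.trans ((eK.prodCongr (LinearEquiv.refl (Polynomial k) (Polynomial k))).trans eC), ?_⟩
      intro m x
      set z : K := (eθ.symm x).1 with hz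
      set g : Polynomial k := (eθ.symm x).2 with hgdef
      have hx : (x : Fin (n + 1) → Polynomial k)
          = extL n (z : Fin n → Polynomial k) + g • y := by
        have h1 := eθ.apply_symm_apply x
        have h2 := congrArg Subtype.val h1
        rw [show ((eθ (eθ.symm x)) : Fin (n + 1) → Polynomial k) = Θ (eθ.symm x) from rfl,
          hΘ] at h2
        exact h2.symm
      have heq : (eθ.symm.trans ((eK.prodCongr (LinearEquiv.refl (Polynomial k) (Polynomial k))).trans
          eC)) x = Fin.cons g (eK z) := rfl
      rw [heq]
      have hR : Fin.cons g (eK z) ∈ grF k d (n' + 1) (Fin.cons m₀ ps'') m ↔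
          g ∈ freeGrading k d m₀ m ∧ (eK z) ∈ grF k d n' ps'' m := by
        rw [mem_grF]
        constructor
        · intro h
          refine ⟨by simpa using h 0, ?_⟩
          rw [mem_grF]
          intro i
          simpa using h i.succ
        · rintro ⟨h0, h⟩ i
          refine Fin.cases ?_ (fun i => ?_) i
          · simpa using h0
          · simpa using mem_grF.mp h i
      rw [hR, ← heK m z, ← extL_mem_grF (ps := ps), hx]
      constructor
      · intro hmem
        have h00 : g * X ^ a ∈ freeGrading k d (ps 0) m := by
          have := mem_grF.mp hmem 0
          simpa [hy0] using this
        by_cases hg0 : g = 0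
        · refine ⟨by rw [hg0]; exact zero_mem _, ?_⟩
          have hmem' := hmem
          rw [hg0, zero_smul, add_zero] at hmem'
          exact hmem'
        rcases (mem_freeGrading_iff hd).mp h00 with h | ⟨j', hj', c', hc'⟩
        · exact absurd h (mul_ne_zero hg0 hXa)
        have hc'0 : c' ≠ 0 := by
          rintro rfl
          rw [C_0, zero_mul] at hc'
          exact (mul_ne_zero hg0 hXa) hc'
        have hdeg : g.natDegree + a = j' := by
          have h1 := congrArg natDegree hc'
          rwa [natDegree_mul hg0 hXa, natDegree_X_pow, natDegree_C_mul_X_pow j' c' hc'0] at h1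
        have hle : a ≤ j' := by omega
        have hgeq : g = C c' * X ^ (j' - a) := by
          apply mul_right_cancel₀ hXa
          rw [hc', mul_assoc, ← pow_add, Nat.sub_add_cancel hle]
        have hgFG : g ∈ freeGrading k d m₀ m := by
          rw [mem_freeGrading_iff hd]
          refine Or.inr ⟨j' - a, ?_, c', hgeq⟩
          rw [hm₀, hj']
          push_cast [hle]
          ring
        refine ⟨hgFG, ?_⟩
        have hsub : extL n (z : Fin n → Polynomial k)
            = (extL n (z : Fin n → Polynomial k) + g • y) - g • y := by ring
        rw [hsub]
        exact Submodule.sub_mem _ hmem (smul_mem_grF hd hgFG hyG)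
      · rintro ⟨hg, hz'⟩
        exact add_mem hz' (smul_mem_grF hd hg hyG)

lemma mem_freeSumGrading_iff {d : ℤ} {n : ℕ} {ps : Fin n → ℤ} {m : ℤ}
    {x : ⨁ _i : Fin n, Polynomial k} :
    x ∈ freeSumGrading k d n ps m ↔ ∀ i, x i ∈ freeGrading k d (ps i) m := by
  simp only [freeSumGrading, Submodule.mem_iInf, Submodule.mem_comap]
  exact forall_congr' fun i => by rw [← DirectSum.apply_eq_component]

variable (k)

theorem stmt_11 (d : ℤ) (hd : d ≠ 0) (n₀ : ℕ) (ps : Fin n₀ → ℤ)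
    (N : Submodule (Polynomial k) (⨁ _i : Fin n₀, Polynomial k))
    (hgraded : N.restrictScalars k =
      ⨆ m : ℤ, (N.restrictScalars k ⊓ freeSumGrading k d n₀ ps m)) :
    ∃ (n₁ : ℕ) (ps' : Fin n₁ → ℤ)
      (e : N ≃ₗ[Polynomial k] ⨁ _i : Fin n₁, Polynomial k),
      ∀ (m : ℤ) (x : N),
        (x : ⨁ _i : Fin n₀, Polynomial k) ∈ freeSumGrading k d n₀ ps m ↔
          e x ∈ freeSumGrading k d n₁ ps' m := by
  set Φ := DirectSum.linearEquivFunOnFintype (Polynomial k) (Fin n₀) (fun _ => Polynomial k)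
    with hΦdef
  have hΦ : ∀ (x : ⨁ _i : Fin n₀, Polynomial k) (i : Fin n₀), Φ x i = x i := fun x i => rfl
  set N' := N.map (Φ : (⨁ _i : Fin n₀, Polynomial k) →ₗ[Polynomial k] (Fin n₀ → Polynomial k))
    with hN'
  have hHG : ∀ x ∈ N', ∃ f : ℤ →₀ (Fin n₀ → Polynomial k),
      (∀ m, f m ∈ N') ∧ (∀ m, f m ∈ grF k d n₀ ps m) ∧ (f.sum fun _ v => v) = x := by
    intro x hx
    obtain ⟨x₀, hx₀N, rfl⟩ := hx
    have hx₀ : x₀ ∈ ⨆ m : ℤ, (N.restrictScalars k ⊓ freeSumGrading k d n₀ ps m) := by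
      rw [← hgraded]; exact hx₀N
    obtain ⟨f, hf, hfsum⟩ := (Submodule.mem_iSup_iff_exists_finsupp _ _).mp hx₀
    refine ⟨f.mapRange Φ (map_zero _), fun m => ?_, fun m => ?_, ?_⟩
    · rw [Finsupp.mapRange_apply]
      exact ⟨f m, ((hf m).1 : f m ∈ N), rfl⟩
    · rw [Finsupp.mapRange_apply, mem_grF]
      intro i
      rw [hΦ]
      exact mem_freeSumGrading_iff.mp (hf m).2 i
    · rw [Finsupp.sum_mapRange_index (fun _ => rfl)]
      rw [← hfsum, map_finsuppSum]
      rfl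
  obtain ⟨n₁, ps', e', he'⟩ := main_free hd n₀ ps N' hHG
  set Φ₁ := DirectSum.linearEquivFunOnFintype (Polynomial k) (Fin n₁) (fun _ => Polynomial k)
    with hΦ₁def
  have hΦ₁ : ∀ (v : ⨁ _i : Fin n₁, Polynomial k) (i : Fin n₁), Φ₁ v i = v i := fun v i => rfl
  let e₁ : N ≃ₗ[Polynomial k] N' := Φ.submoduleMap N
  refine ⟨n₁, ps', e₁.trans (e'.trans Φ₁.symm), ?_⟩
  intro m x
  have step1 : (x : ⨁ _i : Fin n₀, Polynomial k) ∈ freeSumGrading k d n₀ ps m ↔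
      ((e₁ x : Fin n₀ → Polynomial k)) ∈ grF k d n₀ ps m := by
    rw [mem_freeSumGrading_iff, mem_grF]
    have : (e₁ x : Fin n₀ → Polynomial k) = Φ (x : ⨁ _i : Fin n₀, Polynomial k) := rfl
    rw [this]
    exact forall_congr' fun i => by rw [hΦ]
  rw [step1, he' m (e₁ x)]
  have step2 : (e₁.trans (e'.trans Φ₁.symm)) x = Φ₁.symm (e' (e₁ x)) := rfl
  rw [step2, mem_freeSumGrading_iff]
  have step3 : ∀ i, (Φ₁.symm (e' (e₁ x))) i = e' (e₁ x) i := by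
    intro i
    conv_rhs => rw [← Φ₁.apply_symm_apply (e' (e₁ x))]
    rw [hΦ₁]
  rw [mem_grF]
  exact forall_congr' fun i => by rw [step3 i]

end
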